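/- arXiv:2310.17730 — 6 statements merged into one kernel-verified Lean document; each statement's English description precedes it below -/
import Mathlib

section
/- Let G be a graph and 𝓑 = (B_1, B_2, B_3, B_4) a rainbow (2 choose 2)-free blockade in G of width W. Then there exists a set A ⊆ B_1 ∪ B_2 with |A| ≥ W such that A is anticomplete to B_3 or A is anticomplete to B_4 (i.e., (A, B_3) or (A, B_4) is a pure pair with no edges between the two sets). -/
/-- `(a 0, ..., a (k-1))` has the `(k choose 2)`-property over `X`: there are witnesses
`b i j ∈ X` (for `i < j`) adjacent to `a i` and `a j` and non-adjacent to every other `a m`. -/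
def HasKC2Prop {V : Type} (G : SimpleGraph V) {k : ℕ} (a : Fin k → V) (X : Set V) : Prop :=
  ∃ b : Fin k → Fin k → V, ∀ i j : Fin k, i < j →
    b i j ∈ X ∧ G.Adj (b i j) (a i) ∧ G.Adj (b i j) (a j) ∧
    ∀ m : Fin k, m ≠ i → m ≠ j → ¬ G.Adj (b i j) (a m)

/-- A blockade: a sequence of pairwise disjoint nonempty sets of vertices. -/
def IsBlockade {V : Type} {t : ℕ} (B : Fin t → Finset V) : Prop :=
  (∀ i, (B i).Nonempty) ∧ ∀ i j, i ≠ j → Disjoint (B i) (B j)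

/-- The blockade `B` is rainbow `(k choose 2)`-free: there is no tuple of vertices
lying in pairwise distinct blocks with the `(k choose 2)`-property over the union
of the blocks. -/
def IsRainbowKC2Free {V : Type} (G : SimpleGraph V) {t : ℕ} (B : Fin t → Finset V)
    (k : ℕ) : Prop :=
  ¬ ∃ (a : Fin k → V) (f : Fin k → Fin t), Function.Injective f ∧
      (∀ i, a i ∈ B (f i)) ∧ HasKC2Prop G a {x | ∃ i, x ∈ B i}

/-- Given a rainbow `(2 choose 2)`-free blockade `(B 0, B 1, B 2, B 3)` of width `W`,
there is a set `A ⊆ B 0 ∪ B 1` with `|A| ≥ W` that is anticomplete to `B 2` or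
anticomplete to `B 3`. -/
theorem rainbow_two_free_pure_pair {V : Type} [DecidableEq V] (G : SimpleGraph V)
    (B : Fin 4 → Finset V) (W : ℕ) (hB : IsBlockade B)
    (hW : ∀ i, W ≤ (B i).card) (hfree : IsRainbowKC2Free G B 2) :
    ∃ A : Finset V, A ⊆ B 0 ∪ B 1 ∧ W ≤ A.card ∧
      ((∀ x ∈ A, ∀ y ∈ B 2, ¬ G.Adj x y) ∨ (∀ x ∈ A, ∀ y ∈ B 3, ¬ G.Adj x y)) := by
  classical
  obtain ⟨hne, hdisj⟩ := hB
  -- Key: no vertex of the union has neighbors in two distinct blocks.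
  have key : ∀ x y z : V, (∃ i, x ∈ B i) → ∀ i j : Fin 4, i ≠ j → y ∈ B i → z ∈ B j →
      G.Adj x y → G.Adj x z → False := by
    intro x y z hx i j hij hy hz hxy hxz
    apply hfree
    refine ⟨![y, z], ![i, j], ?_, ?_, fun _ _ => x, ?_⟩
    · intro p q hpq
      fin_cases p <;> fin_cases q <;> simp_all
    · intro m; fin_cases m <;> simpa
    · intro p q hpq
      fin_cases p <;> fin_cases q <;> simp_all
  set S := (B 0 ∪ B 1).filter (fun x => ∀ y ∈ B 2, ¬ G.Adj x y) with hSdef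
  by_cases h : W ≤ S.card
  · exact ⟨S, Finset.filter_subset _ _, h,
      Or.inl fun x hx => (Finset.mem_filter.1 hx).2⟩
  · set T := (B 0 ∪ B 1).filter (fun x => ¬ ∀ y ∈ B 2, ¬ G.Adj x y) with hTdef
    have hcard : S.card + T.card = (B 0 ∪ B 1).card :=
      Finset.card_filter_add_card_filter_not _
    have hunion : W + W ≤ (B 0 ∪ B 1).card := by
      rw [Finset.card_union_of_disjoint (hdisj 0 1 (by decide))]
      exact Nat.add_le_add (hW 0) (hW 1)
    have hT : W ≤ T.card := by omega
    refine ⟨T, Finset.filter_subset _ _, hT, Or.inr ?_⟩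
    intro x hx z hz hxz
    obtain ⟨hxU, hx2⟩ := Finset.mem_filter.1 hx
    push_neg at hx2
    obtain ⟨y, hy, hxy⟩ := hx2
    have hxmem : ∃ i, x ∈ B i := by
      rcases Finset.mem_union.1 hxU with h' | h'
      exacts [⟨0, h'⟩, ⟨1, h'⟩]
    exact key x y z hxmem 2 3 (by decide) hy hz hxy hxz
end

section
/- Let n be a positive integer divisible by 4, and let G be a graph with 𝓑 = (B_1, ..., B_n) a rainbow (2 choose 2)-free blockade in G of width W. Then there exist disjoint sets A, B ⊆ B_1 ∪ ... ∪ B_n with |A| ≥ W·n/4 and |B| ≥ W·n/4 such that A is anticomplete to B. (Take L = B_1 ∪ ... ∪ B_{n/4}, R = B_{n/4+1} ∪ ... ∪ B_{n/2}; every vertex of the remaining blocks is anticomplete to L or to R, so one of the corresponding two sets has at least half of the remaining vertices.) -/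
lemma card_filter_val_lt (n m : ℕ) (hm : m ≤ n) :
    ((Finset.univ : Finset (Fin n)).filter (fun i => i.val < m)).card = m := by
  have : (Finset.univ : Finset (Fin n)).filter (fun i => i.val < m) =
      (Finset.univ : Finset (Fin m)).map (Fin.castLEEmb hm) := by
    ext i
    simp [Fin.ext_iff]
    constructor
    · intro h; exact ⟨⟨i, h⟩, rfl⟩
    · rintro ⟨j, hj⟩; omega
  rw [this]; simp

/-- Given a rainbow `(2 choose 2)`-free blockade of length `n` (with `4 ∣ n`, `n > 0`)
and width `W`, there are disjoint subsets `A`, `C` of the union of the blocks, each of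
size at least `W·n/4`, with `A` anticomplete to `C`. -/
theorem rainbow_two_free_anticomplete_pair {V : Type} [DecidableEq V]
    (G : SimpleGraph V) (n : ℕ) (hn : 0 < n) (hn4 : 4 ∣ n)
    (B : Fin n → Finset V) (W : ℕ) (hB : IsBlockade B)
    (hW : ∀ i, W ≤ (B i).card) (hfree : IsRainbowKC2Free G B 2) :
    ∃ A C : Finset V,
      (↑A : Set V) ⊆ {x | ∃ i, x ∈ B i} ∧ (↑C : Set V) ⊆ {x | ∃ i, x ∈ B i} ∧
      Disjoint A C ∧ W * (n / 4) ≤ A.card ∧ W * (n / 4) ≤ C.card ∧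
      ∀ x ∈ A, ∀ y ∈ C, ¬ G.Adj x y := by
  classical
  obtain ⟨hne, hdisj⟩ := hB
  obtain ⟨q, hq⟩ := hn4
  have hq1 : 1 ≤ q := by omega
  have hnq : n / 4 = q := by omega
  set IL := Finset.univ.filter (fun i : Fin n => i.val < q) with hILdef
  set IR := Finset.univ.filter (fun i : Fin n => q ≤ i.val ∧ i.val < 2*q) with hIRdef
  set IS := Finset.univ.filter (fun i : Fin n => 2*q ≤ i.val) with hISdef
  set L := IL.biUnion B with hLdef
  set R := IR.biUnion B with hRdef
  set S := IS.biUnion B with hSdef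
  -- cardinalities of index sets
  have hIL : IL.card = q := card_filter_val_lt n q (by omega)
  have hIR : IR.card = q := by
    have h1 : IR = (Finset.univ.filter (fun i : Fin n => i.val < 2*q)) \ IL := by
      ext i; simp [hIRdef, hILdef]; omega
    have h2 : IL ⊆ Finset.univ.filter (fun i : Fin n => i.val < 2*q) := by
      intro i hi; simp [hILdef] at hi; simp; omega
    rw [h1, Finset.card_sdiff_of_subset h2, card_filter_val_lt n (2*q) (by omega), hIL]
    omega
  have hIS : IS.card = 2*q := by
    have h1 : IS = Finset.univ \ (Finset.univ.filter (fun i : Fin n => i.val < 2*q)) := by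
      ext i; simp [hISdef]
    rw [h1, Finset.card_sdiff_of_subset (Finset.subset_univ _),
      card_filter_val_lt n (2*q) (by omega)]
    have : (Finset.univ : Finset (Fin n)).card = n := by simp
    omega
  -- lower bound for cards of unions
  have hcardU : ∀ I : Finset (Fin n), W * I.card ≤ (I.biUnion B).card := by
    intro I
    rw [Finset.card_biUnion (fun i _ j _ hij => hdisj i j hij)]
    calc W * I.card = I.card • W := by rw [smul_eq_mul, mul_comm]
    _ ≤ ∑ i ∈ I, (B i).card := Finset.card_nsmul_le_sum I _ W (fun i _ => hW i)
  -- disjointness of unions over disjoint index sets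
  have hdisjU : ∀ I J : Finset (Fin n), Disjoint I J →
      Disjoint (I.biUnion B) (J.biUnion B) := by
    intro I J hIJ
    rw [Finset.disjoint_left]
    intro v hvI hvJ
    obtain ⟨i, hi, hvi⟩ := Finset.mem_biUnion.mp hvI
    obtain ⟨j, hj, hvj⟩ := Finset.mem_biUnion.mp hvJ
    have hij : i ≠ j := fun h => Finset.disjoint_left.mp hIJ hi (h ▸ hj)
    exact Finset.disjoint_left.mp (hdisj i j hij) hvi hvj
  -- subsets of the union of blocks
  have hsubU : ∀ I : Finset (Fin n), (↑(I.biUnion B) : Set V) ⊆ {x | ∃ i, x ∈ B i} := by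
    intro I v hv
    obtain ⟨i, _, hvi⟩ := Finset.mem_biUnion.mp hv
    exact ⟨i, hvi⟩
  -- key claim
  have key : ∀ v ∈ S, ∀ x ∈ L, ∀ y ∈ R, G.Adj v x → ¬ G.Adj v y := by
    intro v hvS x hxL y hyR hvx hvy
    apply hfree
    obtain ⟨i, hiIL, hxBi⟩ := Finset.mem_biUnion.mp hxL
    obtain ⟨j, hjIR, hyBj⟩ := Finset.mem_biUnion.mp hyR
    obtain ⟨iv, hivIS, hvB⟩ := Finset.mem_biUnion.mp hvS
    simp only [hILdef, Finset.mem_filter] at hiIL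
    simp only [hIRdef, Finset.mem_filter] at hjIR
    have hij : i ≠ j := by
      intro h; rw [Fin.ext_iff] at h; omega
    refine ⟨![x, y], ![i, j], ?_, ?_, ?_⟩
    · intro s t hst
      fin_cases s <;> fin_cases t <;> simp_all
    · intro s; fin_cases s <;> simpa
    · refine ⟨fun _ _ => v, ?_⟩
      intro s t hst
      have hs0 : s = 0 := by omega
      have ht1 : t = 1 := by omega
      subst hs0; subst ht1
      simp only [Matrix.cons_val_zero, Matrix.cons_val_one, Matrix.head_cons]
      refine ⟨⟨iv, hvB⟩, hvx, hvy, ?_⟩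
      intro m hm0 hm1
      fin_cases m
      · exact absurd rfl hm0
      · exact absurd rfl hm1
  -- split S
  set SL := S.filter (fun v => ∀ x ∈ L, ¬ G.Adj x v) with hSLdef
  set SR := S.filter (fun v => ¬ ∀ x ∈ L, ¬ G.Adj x v) with hSRdef
  have hSsplit : SL.card + SR.card = S.card :=
    Finset.card_filter_add_card_filter_not _
  have hScard : W * (2*q) ≤ S.card := by
    have := hcardU IS; rwa [hIS] at this
  have hcases : W * q ≤ SL.card ∨ W * q ≤ SR.card := by
    have h2 : W * (2*q) = W * q + W * q := by ring
    by_contra h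
    push_neg at h
    omega
  -- anticompleteness of SR to R
  have hSR : ∀ v ∈ SR, ∀ y ∈ R, ¬ G.Adj y v := by
    intro v hv y hy
    simp only [hSRdef, Finset.mem_filter] at hv
    obtain ⟨hvS, hvL⟩ := hv
    push_neg at hvL
    obtain ⟨x, hxL, hxadj⟩ := hvL
    intro hadj
    exact key v hvS x hxL y hy hxadj.symm hadj.symm
  have hdisjLS : Disjoint IL IS := by
    rw [Finset.disjoint_left]
    intro i hi hi'
    simp only [hILdef, hISdef, Finset.mem_filter] at hi hi'
    omega
  have hdisjRS : Disjoint IR IS := by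
    rw [Finset.disjoint_left]
    intro i hi hi'
    simp only [hIRdef, hISdef, Finset.mem_filter] at hi hi'
    omega
  rw [hnq]
  rcases hcases with hc | hc
  · refine ⟨L, SL, hsubU IL, ?_, ?_, ?_, hc, ?_⟩
    · intro v hv
      exact hsubU IS (Finset.mem_coe.mpr (Finset.filter_subset _ _ (Finset.mem_coe.mp hv)))
    · exact Finset.disjoint_of_subset_right (Finset.filter_subset _ _) (hdisjU IL IS hdisjLS)
    · have := hcardU IL; rwa [hIL] at this
    · intro x hx v hv
      simp only [hSLdef, Finset.mem_filter] at hv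
      exact hv.2 x hx
  · refine ⟨R, SR, hsubU IR, ?_, ?_, ?_, hc, ?_⟩
    · intro v hv
      exact hsubU IS (Finset.mem_coe.mpr (Finset.filter_subset _ _ (Finset.mem_coe.mp hv)))
    · exact Finset.disjoint_of_subset_right (Finset.filter_subset _ _) (hdisjU IR IS hdisjRS)
    · have := hcardU IR; rwa [hIR] at this
    · intro y hy v hv
      exact hSR v hv y hy
end

section
/- For all integers s ≥ 1, let D_s = 2^{s-1}·4^{2s-1}. Let G be a graph and 𝓑 = (B_i : i = 1, ..., D_s) a rainbow (2 choose 2)-free blockade in G of length D_s and width W. Then G admits a pure blockade 𝓐 whose pattern is a cograph, of length 2^s and width at least W/D_s. -/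
/-- The family of cographs: the smallest family of (finite) graphs containing every
one-vertex graph and closed under complement, disjoint union, and isomorphism. -/
inductive IsCograph : ∀ {V : Type}, SimpleGraph V → Prop
  | single : IsCograph (⊥ : SimpleGraph (Fin 1))
  | compl {V : Type} {G : SimpleGraph V} : IsCograph G → IsCograph Gᶜ
  | disjUnion {V W : Type} {G : SimpleGraph V} {H : SimpleGraph W} :
      IsCograph G → IsCograph H → IsCograph (G ⊕g H)
  | iso {V W : Type} {G : SimpleGraph V} {H : SimpleGraph W} :
      G ≃g H → IsCograph G → IsCograph H

/-- A pure blockade: a blockade in which every pair of distinct blocks is a pure pair,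
i.e. one block is complete or anticomplete to the other. -/
def IsPureBlockade {V : Type} (G : SimpleGraph V) {m : ℕ} (A : Fin m → Finset V) : Prop :=
  (∀ i, (A i).Nonempty) ∧ (∀ i j, i ≠ j → Disjoint (A i) (A j)) ∧
  ∀ i j, i ≠ j →
    ((∀ x ∈ A i, ∀ y ∈ A j, G.Adj x y) ∨ (∀ x ∈ A i, ∀ y ∈ A j, ¬ G.Adj x y))

/-- The pattern of a pure blockade: `i` and `j` are adjacent iff block `i` is complete
to block `j`. -/
def blockadePattern {V : Type} (G : SimpleGraph V) {m : ℕ} (A : Fin m → Finset V) :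
    SimpleGraph (Fin m) :=
  SimpleGraph.fromRel (fun i j => ∀ x ∈ A i, ∀ y ∈ A j, G.Adj x y)

theorem isCograph_bot_fin : ∀ n : ℕ, IsCograph (⊥ : SimpleGraph (Fin (n + 1))) := by
  intro n
  induction n with
  | zero => exact IsCograph.single
  | succ n ih =>
    refine IsCograph.iso ⟨finSumFinEquiv, ?_⟩ (IsCograph.disjUnion ih IsCograph.single)
    intro a b
    cases a <;> cases b <;> simp [SimpleGraph.sum_adj]

theorem aux_pure_blockade {V : Type} (G : SimpleGraph V) (m t : ℕ)
    (hm : 1 ≤ m) (hmt : m * 2 ≤ t)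
    (B : Fin t → Finset V) (W : ℕ)
    (hB : IsBlockade B) (hW : ∀ i, W ≤ (B i).card)
    (hfree : IsRainbowKC2Free G B 2) :
    ∃ A : Fin m → Finset V,
      IsPureBlockade G A ∧ IsCograph (blockadePattern G A) ∧
      ∀ i, W ≤ t * (A i).card := by
  classical
  have tpos : 0 < t := by omega
  -- key consequence of rainbow-freeness
  have key : ∀ (b x y : V) (i j : Fin t), (∃ m, b ∈ B m) → x ∈ B i → y ∈ B j →
      i ≠ j → G.Adj b x → G.Adj b y → False := by
    intro b x y i j hb hx hy hij hbx hby
    apply hfree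
    refine ⟨![x, y], ![i, j], ?_, ?_, fun _ _ => b, ?_⟩
    · intro p q hpq
      fin_cases p <;> fin_cases q <;> simp_all
    · intro m; fin_cases m <;> simpa
    · intro p q hpq
      fin_cases p <;> fin_cases q <;> simp_all
  -- the "direction" function: the unique block containing neighbours of x
  set φ : V → Fin t := fun x =>
    if h : ∃ j : Fin t, ∃ y ∈ B j, G.Adj x y then h.choose else ⟨0, tpos⟩ with hφdef
  have hφ : ∀ x : V, (∃ m, x ∈ B m) → ∀ (j : Fin t) (y : V), y ∈ B j → G.Adj x y → φ x = j := by
    intro x hx j y hy hxy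
    have h : ∃ j : Fin t, ∃ y ∈ B j, G.Adj x y := ⟨j, y, hy, hxy⟩
    have hspec := h.choose_spec
    obtain ⟨y', hy', hxy'⟩ := hspec
    have : h.choose = j := by
      by_contra hne
      exact key x y' y h.choose j hx hy' hy hne hxy' hxy
    simp only [hφdef, dif_pos h, this]
  -- the dominant class of each block
  have hmax : ∀ i : Fin t, ∃ j : Fin t, ∀ j' : Fin t,
      ((B i).filter (fun x => φ x = j')).card ≤ ((B i).filter (fun x => φ x = j)).card := by
    intro i
    obtain ⟨j, _, hj⟩ := Finset.exists_max_image (Finset.univ : Finset (Fin t))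
      (fun j => ((B i).filter (fun x => φ x = j)).card) ⟨⟨0, tpos⟩, Finset.mem_univ _⟩
    exact ⟨j, fun j' => hj j' (Finset.mem_univ _)⟩
  choose c hc using hmax
  have hcardB : ∀ i : Fin t, (B i).card ≤ t * ((B i).filter (fun x => φ x = c i)).card := by
    intro i
    calc (B i).card = ∑ j : Fin t, ((B i).filter (fun x => φ x = j)).card :=
          Finset.card_eq_sum_card_fiberwise (fun x _ => Finset.mem_univ (φ x))
      _ ≤ (Finset.univ : Finset (Fin t)).card • ((B i).filter (fun x => φ x = c i)).card :=
          Finset.sum_le_card_nsmul _ _ _ (fun j _ => hc i j)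
      _ = t * _ := by simp [Finset.card_univ]
  have hne : ∀ i : Fin t, ((B i).filter (fun x => φ x = c i)).Nonempty := by
    intro i
    rw [← Finset.card_pos]
    have h1 : 1 ≤ (B i).card := Finset.card_pos.mpr (hB.1 i)
    have h2 := hcardB i
    by_contra h
    push_neg at h
    have h0 : ((B i).filter (fun x => φ x = c i)).card = 0 := by omega
    rw [h0, Nat.mul_zero] at h2
    omega
  -- remove the larger endpoint of each 2-cycle of c
  set R : Finset (Fin t) := Finset.univ.filter (fun i => c (c i) = i ∧ c i < i) with hR
  have hRmem : ∀ i : Fin t, i ∈ R ↔ (c (c i) = i ∧ c i < i) := by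
    intro i; simp [hR]
  have hRcard : R.card ≤ Rᶜ.card := by
    refine Finset.card_le_card_of_injOn c ?_ ?_
    · intro i hi
      rw [Finset.mem_coe, hRmem] at hi
      rw [Finset.mem_coe, Finset.mem_compl, hRmem]
      rw [hi.1]
      omega
    · intro i hi j hj hij
      simp only [Finset.coe_filter, Set.mem_setOf_eq, hR] at hi hj
      rw [← hi.2.1, ← hj.2.1, hij]
  have hKbig : m ≤ Rᶜ.card := by
    have := Finset.card_add_card_compl R
    simp only [Fintype.card_fin] at this
    omega
  obtain ⟨K, hKsub, hKcard⟩ := Finset.exists_subset_card_eq hKbig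
  set g : Fin m → Fin t := fun i =>
    (K.equivFin.symm ⟨i.1, by rw [hKcard]; exact i.2⟩ : {x // x ∈ K}).1 with hg
  have hginj : Function.Injective g := by
    intro i j hij
    have := K.equivFin.symm.injective (Subtype.ext hij)
    simpa [Fin.ext_iff] using congrArg Fin.val this
  have hgK : ∀ i, g i ∉ R := by
    intro i
    have h1 : g i ∈ K := (K.equivFin.symm _).2
    have h2 := hKsub h1
    rwa [Finset.mem_compl] at h2
  set A : Fin m → Finset V := fun i => (B (g i)).filter (fun x => φ x = c (g i)) with hA
  have hAsub : ∀ i, A i ⊆ B (g i) := fun i => Finset.filter_subset _ _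
  -- anticomplete
  have hanti : ∀ i j : Fin m, i ≠ j → ∀ x ∈ A i, ∀ y ∈ A j, ¬ G.Adj x y := by
    intro i j hij x hx y hy hadj
    have hgij : g i ≠ g j := fun h => hij (hginj h)
    have hxB : x ∈ B (g i) := hAsub i hx
    have hyB : y ∈ B (g j) := hAsub j hy
    have hφx : φ x = c (g i) := (Finset.mem_filter.mp hx).2
    have hφy : φ y = c (g j) := (Finset.mem_filter.mp hy).2
    have h1 : c (g i) = g j := by rw [← hφx]; exact hφ x ⟨g i, hxB⟩ (g j) y hyB hadj
    have h2 : c (g j) = g i := by rw [← hφy]; exact hφ y ⟨g j, hyB⟩ (g i) x hxB hadj.symm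
    rcases lt_or_gt_of_ne hgij with hlt | hlt
    · exact hgK j ((hRmem (g j)).mpr ⟨by rw [h2, h1], by rw [h2]; exact hlt⟩)
    · exact hgK i ((hRmem (g i)).mpr ⟨by rw [h1, h2], by rw [h1]; exact hlt⟩)
  have hAne : ∀ i, (A i).Nonempty := fun i => hne (g i)
  refine ⟨A, ⟨hAne, ?_, ?_⟩, ?_, ?_⟩
  · intro i j hij
    exact Finset.disjoint_of_subset_left (hAsub i) (Finset.disjoint_of_subset_right (hAsub j)
      (hB.2 _ _ (fun h => hij (hginj h))))
  · intro i j hij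
    exact Or.inr (fun x hx y hy => hanti i j hij x hx y hy)
  · -- pattern is ⊥, hence a cograph
    have hpat : blockadePattern G A = ⊥ := by
      ext i j
      simp only [blockadePattern, SimpleGraph.fromRel_adj, SimpleGraph.bot_adj, iff_false]
      rintro ⟨hij, h | h⟩
      · obtain ⟨x, hx⟩ := hAne i
        obtain ⟨y, hy⟩ := hAne j
        exact hanti i j hij x hx y hy (h x hx y hy)
      · obtain ⟨x, hx⟩ := hAne j
        obtain ⟨y, hy⟩ := hAne i
        exact hanti j i (Ne.symm hij) x hx y hy (h x hx y hy)
    rw [hpat]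
    obtain ⟨n, hn⟩ : ∃ n, m = n + 1 := ⟨m - 1, by omega⟩
    refine IsCograph.iso ⟨finCongr hn.symm, ?_⟩ (isCograph_bot_fin n)
    intro a b; simp
  · intro i
    exact le_trans (hW (g i)) (hcardB (g i))


/-- For `s ≥ 1` let `D_s = 2^(s-1)·4^(2s-1)`. If `G` has a rainbow `(2 choose 2)`-free
blockade of length `D_s` and width `W`, then `G` admits a pure blockade with a cograph
pattern, of length `2^s` and width at least `W / D_s`. -/
theorem rainbow_two_free_pure_blockade {V : Type} (G : SimpleGraph V)
    (s : ℕ) (hs : 1 ≤ s)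
    (B : Fin (2 ^ (s - 1) * 4 ^ (2 * s - 1)) → Finset V) (W : ℕ)
    (hB : IsBlockade B) (hW : ∀ i, W ≤ (B i).card)
    (hfree : IsRainbowKC2Free G B 2) :
    ∃ A : Fin (2 ^ s) → Finset V,
      IsPureBlockade G A ∧ IsCograph (blockadePattern G A) ∧
      ∀ i, (W : ℝ) / ((2 ^ (s - 1) * 4 ^ (2 * s - 1) : ℕ) : ℝ) ≤ ((A i).card : ℝ) := by
  have hts : 2 ^ s * 2 ≤ 2 ^ (s - 1) * 4 ^ (2 * s - 1) := by
    have h1 : (1:ℕ) ≤ 2 ^ (s-1) := Nat.one_le_two_pow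
    have h2 : 2 ^ (s + 1) ≤ 4 ^ (2 * s - 1) := by
      calc 2 ^ (s+1) ≤ 2 ^ (2*(2*s-1)) := Nat.pow_le_pow_right (by norm_num) (by omega)
        _ = (2^2) ^ (2*s-1) := by rw [pow_mul]
        _ = 4 ^ (2*s-1) := by norm_num
    calc 2 ^ s * 2 = 1 * 2 ^ (s+1) := by ring
      _ ≤ 2 ^ (s-1) * 4 ^ (2*s-1) := Nat.mul_le_mul h1 h2
  obtain ⟨A, hA1, hA2, hA3⟩ := aux_pure_blockade G (2 ^ s) (2 ^ (s - 1) * 4 ^ (2 * s - 1))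
    Nat.one_le_two_pow hts B W hB hW hfree
  refine ⟨A, hA1, hA2, fun i => ?_⟩
  have tpos : (0:ℝ) < ((2 ^ (s - 1) * 4 ^ (2 * s - 1) : ℕ) : ℝ) := by positivity
  rw [div_le_iff₀ tpos]
  have := hA3 i
  calc (W : ℝ) ≤ ((2 ^ (s - 1) * 4 ^ (2 * s - 1) : ℕ) : ℝ) * ((A i).card : ℝ) := by
        exact_mod_cast this
    _ = ((A i).card : ℝ) * _ := by ring
end

section
/- Let G be a graph and 𝓑 = (B_i : i = 1, ..., t) a rainbow (2 choose 2)-free blockade in G of length t ≥ 4 and width W. Then G has a pure blockade 𝓐 whose pattern is a cograph, of length at least t^{1/10} and width at least W/t. -/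
lemma botSum {α β : Type} : (⊥ : SimpleGraph α) ⊕g (⊥ : SimpleGraph β) = ⊥ := by
  ext x y
  cases x <;> cases y <;> simp [SimpleGraph.sum_adj]

lemma isCograph_bot (n : ℕ) : IsCograph (⊥ : SimpleGraph (Fin (n + 1))) := by
  induction n with
  | zero => exact IsCograph.single
  | succ n ih =>
    have h := IsCograph.disjUnion ih IsCograph.single
    rw [botSum] at h
    exact IsCograph.iso ⟨finSumFinEquiv, by simp⟩ h

lemma rpow_tenth_le {t : ℕ} (ht : 4 ≤ t) {m : ℕ} (hm : t ≤ 2 * m) :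
    (t : ℝ) ^ ((1 : ℝ) / 10) ≤ (m : ℝ) := by
  have ht1 : (1 : ℝ) ≤ (t : ℝ) := by exact_mod_cast Nat.one_le_iff_ne_zero.mpr (by omega)
  have h1 : (t : ℝ) ^ ((1 : ℝ) / 10) ≤ (t : ℝ) ^ ((1 : ℝ) / 2) :=
    Real.rpow_le_rpow_of_exponent_le ht1 (by norm_num)
  have h2 : (t : ℝ) ^ ((1 : ℝ) / 2) = Real.sqrt t := (Real.sqrt_eq_rpow _).symm
  have ht4 : (4 : ℝ) ≤ (t : ℝ) := by exact_mod_cast ht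
  have h3 : Real.sqrt t ≤ (t : ℝ) / 2 := by
    have : Real.sqrt t ≤ Real.sqrt (((t : ℝ) / 2) ^ 2) := by
      apply Real.sqrt_le_sqrt; nlinarith
    rwa [Real.sqrt_sq (by linarith)] at this
  have hm' : (t : ℝ) / 2 ≤ (m : ℝ) := by
    have : (t : ℝ) ≤ 2 * m := by exact_mod_cast hm
    linarith
  calc (t : ℝ) ^ ((1 : ℝ) / 10) ≤ (t:ℝ) ^ ((1:ℝ)/2) := h1
    _ = Real.sqrt t := h2
    _ ≤ (t:ℝ)/2 := h3
    _ ≤ m := hm'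

/-- If `G` has a rainbow `(2 choose 2)`-free blockade of length `t ≥ 4` and width `W`,
then `G` has a pure blockade with a cograph pattern, of length at least `t^(1/10)` and
width at least `W / t`. -/
theorem rainbow_two_free_pure_blockade_general {V : Type} (G : SimpleGraph V)
    (t : ℕ) (ht : 4 ≤ t) (B : Fin t → Finset V) (W : ℕ)
    (hB : IsBlockade B) (hW : ∀ i, W ≤ (B i).card)
    (hfree : IsRainbowKC2Free G B 2) :
    ∃ (m : ℕ) (A : Fin m → Finset V),
      (t : ℝ) ^ ((1 : ℝ) / 10) ≤ (m : ℝ) ∧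
      IsPureBlockade G A ∧ IsCograph (blockadePattern G A) ∧
      ∀ i, (W : ℝ) / (t : ℝ) ≤ ((A i).card : ℝ) := by
  classical
  obtain ⟨hne, hdisj⟩ := hB
  have htpos : 0 < t := by omega
  -- key uniqueness: a vertex of the union has neighbors in at most one block
  have key : ∀ x : V, (∃ i, x ∈ B i) → ∀ (j j' : Fin t) (y y' : V), y ∈ B j → y' ∈ B j' →
      G.Adj x y → G.Adj x y' → j = j' := by
    intro x hx j j' y y' hy hy' ha ha'
    by_contra hjj
    apply hfree
    refine ⟨![y, y'], ![j, j'], ?_, ?_, fun _ _ => x, ?_⟩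
    · intro u v huv
      fin_cases u <;> fin_cases v <;> simp_all
    · intro u; fin_cases u <;> simpa
    · intro u v huv
      have hu : u = 0 := by omega
      have hv : v = 1 := by omega
      subst hu; subst hv
      refine ⟨hx, by simpa using ha, by simpa using ha', ?_⟩
      intro m hm0 hm1
      exact absurd (by omega : (m : Fin 2) = 0 ∨ (m : Fin 2) = 1) (by tauto)
  -- the target function
  set g : V → Fin t := fun x =>
    if h : ∃ j : Fin t, ∃ y ∈ B j, G.Adj x y then h.choose else ⟨0, htpos⟩ with hgdef
  have hg : ∀ (i : Fin t), ∀ x ∈ B i, ∀ (j : Fin t), ∀ y ∈ B j, G.Adj x y → g x = j := by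
    intro i x hx j y hy hadj
    have hP : ∃ j : Fin t, ∃ y ∈ B j, G.Adj x y := ⟨j, y, hy, hadj⟩
    have h1 : g x = hP.choose := by simp [hgdef, dif_pos hP]
    obtain ⟨y', hy', hadj'⟩ := hP.choose_spec
    rw [h1]
    exact key x ⟨i, hx⟩ _ j y' y hy' hy hadj' hadj
  -- pigeonhole: a large fiber in each block
  have pig : ∀ i : Fin t, ∃ j : Fin t,
      (B i).card ≤ t * ((B i).filter (fun x => g x = j)).card := by
    intro i
    by_contra hcon
    push_neg at hcon
    have hsum : (B i).card = ∑ j : Fin t, ((B i).filter (fun x => g x = j)).card :=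
      Finset.card_eq_sum_card_fiberwise (fun x _ => Finset.mem_univ (g x))
    have hcard : 1 ≤ (B i).card := Finset.card_pos.mpr (hne i)
    have hchain : t * (B i).card ≤ t * ((B i).card - 1) := by
      calc t * (B i).card = ∑ j : Fin t, t * ((B i).filter (fun x => g x = j)).card := by
            conv_lhs => rw [hsum, Finset.mul_sum]
        _ ≤ ∑ _j : Fin t, ((B i).card - 1) :=
            Finset.sum_le_sum (fun j _ => by have := hcon j; omega)
        _ = t * ((B i).card - 1) := by
            simp [Finset.sum_const, Finset.card_univ, mul_comm]
    have := Nat.le_of_mul_le_mul_left hchain htpos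
    omega
  choose f hf using pig
  set A' : Fin t → Finset V := fun i => (B i).filter (fun x => g x = f i) with hA'def
  have hA'card : ∀ i, (B i).card ≤ t * (A' i).card := hf
  have hA'sub : ∀ i, A' i ⊆ B i := fun i => Finset.filter_subset _ _
  have hA'ne : ∀ i, (A' i).Nonempty := by
    intro i
    rw [← Finset.card_pos]
    have this := hA'card i
    have hcard : 1 ≤ (B i).card := Finset.card_pos.mpr (hne i)
    by_contra h
    simp only [not_lt, Nat.le_zero] at h
    rw [h, Nat.mul_zero] at this
    omega
  -- the good index set
  set S : Finset (Fin t) :=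
    Finset.univ.filter (fun i => ¬ (f (f i) = i ∧ f i ≠ i ∧ f i < i)) with hSdef
  have hShalf : t ≤ 2 * S.card := by
    set C : Finset (Fin t) :=
      Finset.univ.filter (fun i => (f (f i) = i ∧ f i ≠ i ∧ f i < i)) with hCdef
    have hsplit : C.card + S.card = t := by
      have := Finset.card_filter_add_card_filter_not
        (s := (Finset.univ : Finset (Fin t)))
        (p := fun i => (f (f i) = i ∧ f i ≠ i ∧ f i < i))
      simpa [hCdef, hSdef, Finset.card_univ] using this
    have hinj : C.card ≤ S.card := by
      apply Finset.card_le_card_of_injOn f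
      · intro i hi
        simp only [hCdef, Finset.mem_coe, Finset.mem_filter, Finset.mem_univ, true_and] at hi
        simp only [hSdef, Finset.mem_coe, Finset.mem_filter, Finset.mem_univ, true_and]
        intro ⟨_, _, hlt⟩
        rw [hi.1] at hlt
        exact absurd hlt (not_lt.mpr (le_of_lt hi.2.2))
      · intro i hi i' hi' hfe
        simp only [hCdef, Finset.coe_filter, Finset.mem_univ, true_and,
          Set.mem_setOf_eq] at hi hi'
        rw [← hi.1, hfe, hi'.1]
    omega
  set m : ℕ := S.card with hmdef
  have hm2 : 2 ≤ m := by omega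
  set e : Fin m → Fin t := fun k => (S.orderIsoOfFin rfl k : Fin t) with hedef
  have heS : ∀ k, e k ∈ S := fun k => (S.orderIsoOfFin rfl k).2
  have heinj : Function.Injective e := fun a b hab => by
    have := (S.orderIsoOfFin rfl).injective (Subtype.ext hab)
    exact this
  set A : Fin m → Finset V := fun k => A' (e k) with hAdef
  -- anticompleteness between distinct blocks of A
  have hanti : ∀ k l : Fin m, k ≠ l → ∀ x ∈ A k, ∀ y ∈ A l, ¬ G.Adj x y := by
    intro k l hkl x hx y hy hadj
    set i := e k
    set j := e l
    have hij : i ≠ j := fun h => hkl (heinj h)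
    have hxB : x ∈ B i := hA'sub i hx
    have hyB : y ∈ B j := hA'sub j hy
    have hgx : g x = f i := (Finset.mem_filter.mp hx).2
    have hgy : g y = f j := (Finset.mem_filter.mp hy).2
    have hfi : f i = j := by rw [← hgx]; exact hg i x hxB j y hyB hadj
    have hfj : f j = i := by rw [← hgy]; exact hg j y hyB i x hxB hadj.symm
    have hiS := heS k
    have hjS := heS l
    simp only [hSdef, Finset.mem_filter, Finset.mem_univ, true_and] at hiS hjS
    have h1 : ¬ (f i < i) := fun h => hiS ⟨by rw [hfi, hfj], by rw [hfi]; exact hij.symm, h⟩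
    have h2 : ¬ (f j < j) := fun h => hjS ⟨by rw [hfj, hfi], by rw [hfj]; exact hij, h⟩
    rw [hfi] at h1
    rw [hfj] at h2
    exact hij (le_antisymm (not_lt.mp h1) (not_lt.mp h2))
  have hAne : ∀ k, (A k).Nonempty := fun k => hA'ne (e k)
  refine ⟨m, A, rpow_tenth_le ht hShalf, ⟨hAne, ?_, ?_⟩, ?_, ?_⟩
  · intro k l hkl
    exact Finset.disjoint_of_subset_left (hA'sub (e k))
      (Finset.disjoint_of_subset_right (hA'sub (e l)) (hdisj _ _ (fun h => hkl (heinj h))))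
  · intro k l hkl
    exact Or.inr (hanti k l hkl)
  · -- pattern is bot, hence a cograph
    have hpat : blockadePattern G A = ⊥ := by
      ext k l
      simp only [blockadePattern, SimpleGraph.fromRel_adj, SimpleGraph.bot_adj, iff_false]
      rintro ⟨hkl, hcomp | hcomp⟩
      · obtain ⟨x, hx⟩ := hAne k
        obtain ⟨y, hy⟩ := hAne l
        exact hanti k l hkl x hx y hy (hcomp x hx y hy)
      · obtain ⟨x, hx⟩ := hAne l
        obtain ⟨y, hy⟩ := hAne k
        exact hanti l k (Ne.symm hkl) x hx y hy (hcomp x hx y hy)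
    rw [hpat]
    obtain ⟨m', hm'⟩ : ∃ m', m = m' + 1 := ⟨m - 1, by omega⟩
    rw [hm']
    exact isCograph_bot m'
  · intro k
    have h1 : (W : ℝ) ≤ (t : ℝ) * ((A k).card : ℝ) := by
      have := hA'card (e k)
      have := hW (e k)
      exact_mod_cast le_trans (by exact_mod_cast hW (e k)) (by exact_mod_cast hA'card (e k))
    rw [div_le_iff₀ (by exact_mod_cast htpos)]
    linarith [h1]
end

section
/- Let k ≥ 2 and let 𝓐 = (A_i : 1 ≤ i ≤ t) be a rainbow (k choose 2)-free blockade in a graph G, with union A. Suppose a ∈ A, say a ∈ A_{i_0}, and ((a_j, B_j) : 1 ≤ j ≤ t') is a comb in (E_a ∩ A, ¬E_a ∩ A) (where E_a is the set of neighbours of a and ¬E_a the set of non-neighbours of a) such that 𝓑 = (B_j : 1 ≤ j ≤ t') is a minor of 𝓐 and B_j ∩ A_{i_0} = ∅ for all j. Then 𝓑 is rainbow (k−1 choose 2)-free. -/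
/-- `((a i, B i) : i < t')` is a `(t', k)`-comb in `(C, D)` (for disjoint `C`, `D`):
the `a i` are distinct vertices of `C`; the `B i` are pairwise disjoint subsets of `D`,
each of cardinality at least `k` and avoiding all the `a j`; each `a i` is adjacent to
every vertex of `B i` and has no neighbour in `B j` for `j ≠ i`. -/
def IsCombIn {V : Type} (G : SimpleGraph V) {t' : ℕ} (a : Fin t' → V)
    (B : Fin t' → Finset V) (k : ℝ) (C D : Set V) : Prop :=
  Disjoint C D ∧
  Function.Injective a ∧
  (∀ i, a i ∈ C) ∧
  (∀ i, (↑(B i) : Set V) ⊆ D) ∧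
  (∀ i j, i ≠ j → Disjoint (B i) (B j)) ∧
  (∀ i j, a i ∉ B j) ∧
  (∀ i, ∀ x ∈ B i, G.Adj (a i) x) ∧
  (∀ i j, i ≠ j → ∀ x ∈ B j, ¬ G.Adj (a i) x) ∧
  (∀ i, k ≤ ((B i).card : ℝ))

/-- Let `k ≥ 2` and let `𝓐 = (A i : i < t)` be a rainbow `(k choose 2)`-free blockade,
with union `A`. If `a ∈ A i₀` and `((as j, B j) : j < t')` is a comb in
`(E_a ∩ A, ¬E_a ∩ A)` such that `(B j : j < t')` is a minor of `𝓐` (witnessed by a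
strictly monotone `g` with `B j ⊆ A (g j)`) and `B j ∩ A i₀ = ∅` for all `j`, then
`(B j : j < t')` is rainbow `(k-1 choose 2)`-free. -/
theorem comb_minor_rainbow_free {V : Type} (G : SimpleGraph V) (k t t' : ℕ)
    (hk : 2 ≤ k) (A : Fin t → Finset V) (hA : IsBlockade A)
    (hfree : IsRainbowKC2Free G A k)
    (a : V) (i₀ : Fin t) (ha : a ∈ A i₀)
    (as : Fin t' → V) (B : Fin t' → Finset V)
    (hcomb : IsCombIn G as B 0
      {x | (∃ i, x ∈ A i) ∧ G.Adj a x} {x | (∃ i, x ∈ A i) ∧ ¬ G.Adj a x})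
    (g : Fin t' → Fin t) (hg : StrictMono g)
    (hsub : ∀ j, B j ⊆ A (g j)) (hne : ∀ j, (B j).Nonempty)
    (hi₀ : ∀ j, Disjoint (B j) (A i₀)) :
    IsRainbowKC2Free G B (k - 1) := by
  obtain ⟨m, rfl⟩ : ∃ m, k = m + 1 := ⟨k - 1, (Nat.succ_pred_eq_of_pos (by omega)).symm⟩
  simp only [Nat.add_sub_cancel]
  rintro ⟨c, f, hf, hcf, b, hb⟩
  obtain ⟨hCD, hinj, haC, hBD, hBdisj, hnotin, hadj, hnonadj, -⟩ := hcomb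
  -- g ∘ f composed values avoid i₀
  have hgfne : ∀ j, g (f j) ≠ i₀ := by
    intro j h
    obtain ⟨x, hx⟩ := hne (f j)
    exact Finset.disjoint_left.mp (hi₀ (f j)) hx (h ▸ hsub (f j) hx)
  apply hfree
  refine ⟨Fin.cases a c, Fin.cases i₀ (fun i => g (f i)), ?_, ?_, ?_⟩
  · intro i j hij
    induction i using Fin.cases with
    | zero =>
      induction j using Fin.cases with
      | zero => rfl
      | succ j => exact absurd hij.symm (hgfne j)
    | succ i =>
      induction j using Fin.cases with
      | zero => exact absurd hij (hgfne i)
      | succ j =>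
        simp only [Fin.cases_succ] at hij
        exact congrArg Fin.succ (hf (hg.injective hij))
  · intro i
    induction i using Fin.cases with
    | zero => exact ha
    | succ i => exact hsub (f i) (hcf i)
  · refine ⟨Fin.cases (fun j => Fin.cases a (fun j' => as (f j')) j)
      (fun i' j => Fin.cases a (fun j' => b i' j') j), ?_⟩
    intro i j hij
    induction i using Fin.cases with
    | zero =>
      induction j using Fin.cases with
      | zero => exact absurd hij (lt_irrefl _)
      | succ j =>
        simp only [Fin.cases_zero, Fin.cases_succ]
        obtain ⟨⟨i1, hi1⟩, hadj_a⟩ := haC (f j)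
        refine ⟨⟨i1, hi1⟩, hadj_a.symm, hadj (f j) (c j) (hcf j), ?_⟩
        intro n hn0 hnj
        induction n using Fin.cases with
        | zero => exact absurd rfl hn0
        | succ n =>
          simp only [Fin.cases_succ]
          have hfn : f j ≠ f n := fun h => hnj (congrArg Fin.succ (hf h.symm))
          intro hadjn
          exact hnonadj (f j) (f n) hfn (c n) (hcf n) hadjn
    | succ i =>
      induction j using Fin.cases with
      | zero => exact absurd (Fin.succ_pos i) (not_lt_of_gt hij)
      | succ j =>
        have hij' : i < j := by
          simpa [Fin.succ_lt_succ_iff] using hij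
        obtain ⟨⟨ℓ, hbB⟩, hadji, hadjj, hother⟩ := hb i j hij'
        simp only [Fin.cases_succ]
        refine ⟨⟨g ℓ, hsub ℓ hbB⟩, hadji, hadjj, ?_⟩
        intro n hn0 hnj
        induction n using Fin.cases with
        | zero =>
          simp only [Fin.cases_zero]
          have := hBD ℓ hbB
          intro hadja
          exact this.2 hadja.symm
        | succ n =>
          simp only [Fin.cases_succ]
          exact hother n (fun h => hn0 (congrArg Fin.succ h))
            (fun h => hnj (congrArg Fin.succ h))
end

section
/- Let 0 < τ < 1 and let G be a τ-critical graph. Suppose C_1, ..., C_m are pairwise disjoint nonempty proper subsets of V(G), pairwise anticomplete (no edges between C_u and C_{u'} for u ≠ u'), each of cardinality at least w ≥ 1. Then G contains an induced cograph of size at least m·w^τ; consequently m·w^τ < |G|^τ. -/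
/-- A graph `G` is `τ`-critical if every induced cograph in `G` has size `< |G|^τ`,
while every nonempty proper induced subgraph `G'` of `G` contains an induced cograph
of size at least `|G'|^τ`. -/
def TauCritical {V : Type} [Fintype V] (τ : ℝ) (G : SimpleGraph V) : Prop :=
  (∀ S : Finset V, IsCograph (G.induce (↑S : Set V)) →
      (S.card : ℝ) < (Fintype.card V : ℝ) ^ τ) ∧
  (∀ S : Finset V, S.Nonempty → S ≠ Finset.univ →
      ∃ T ⊆ S, IsCograph (G.induce (↑T : Set V)) ∧ (S.card : ℝ) ^ τ ≤ (T.card : ℝ))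

lemma induce_adj_iff {V : Type} (G : SimpleGraph V) (s : Set V) (a b : s) :
    (G.induce s).Adj a b ↔ G.Adj a b := Iff.rfl

open Classical in
lemma cograph_union {V : Type} (G : SimpleGraph V) (A B : Finset V) (hd : Disjoint A B)
    (hanti : ∀ x ∈ A, ∀ y ∈ B, ¬ G.Adj x y)
    (hA : IsCograph (G.induce (↑A : Set V))) (hB : IsCograph (G.induce (↑B : Set V))) :
    IsCograph (G.induce (↑(A ∪ B) : Set V)) := by
  have hd' : Disjoint (↑A : Set V) (↑B : Set V) := by
    exact_mod_cast Finset.disjoint_coe.mpr hd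
  let e : (↑A : Set V) ⊕ (↑B : Set V) ≃ (↑(A ∪ B) : Set V) :=
    (Equiv.Set.union hd').symm.trans (Equiv.setCongr (by simp))
  have hel : ∀ a : (↑A : Set V), ((e (Sum.inl a) : V)) = a := by
    intro a
    show ((Equiv.setCongr (by simp) ((Equiv.Set.union hd').symm (Sum.inl a)) : V)) = a
    rw [Equiv.Set.union_symm_apply_left hd' a]; rfl
  have her : ∀ b : (↑B : Set V), ((e (Sum.inr b) : V)) = b := by
    intro b
    show ((Equiv.setCongr (by simp) ((Equiv.Set.union hd').symm (Sum.inr b)) : V)) = b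
    rw [Equiv.Set.union_symm_apply_right hd' b]; rfl
  refine IsCograph.iso ⟨e, ?_⟩ (IsCograph.disjUnion hA hB)
  rintro (a | a) (b | b)
  · rw [induce_adj_iff, hel, hel]; exact Iff.rfl
  · rw [induce_adj_iff, hel, her]
    simp only [SimpleGraph.sum_adj]
    exact ⟨fun h => absurd h (hanti _ (Finset.mem_coe.mp a.2) _ (Finset.mem_coe.mp b.2)),
      fun h => h.elim⟩
  · rw [induce_adj_iff, her, hel]
    simp only [SimpleGraph.sum_adj]
    exact ⟨fun h => absurd h.symm (hanti _ (Finset.mem_coe.mp b.2) _ (Finset.mem_coe.mp a.2)),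
      fun h => h.elim⟩
  · rw [induce_adj_iff, her, her]; exact Iff.rfl

open Classical in
lemma cograph_biUnion {ι V : Type} (G : SimpleGraph V) (s : Finset ι) (hs : s.Nonempty)
    (T : ι → Finset V)
    (hdisj : ∀ u ∈ s, ∀ u' ∈ s, u ≠ u' → Disjoint (T u) (T u'))
    (hanti : ∀ u ∈ s, ∀ u' ∈ s, u ≠ u' → ∀ x ∈ T u, ∀ y ∈ T u', ¬ G.Adj x y)
    (hco : ∀ u ∈ s, IsCograph (G.induce (↑(T u) : Set V))) :
    IsCograph (G.induce (↑(s.biUnion T) : Set V)) := by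
  induction hs using Finset.Nonempty.cons_induction with
  | singleton a =>
    rw [Finset.singleton_biUnion]
    exact hco a (by simp)
  | cons a s ha hs ih =>
    rw [Finset.cons_eq_insert, Finset.biUnion_insert]
    refine cograph_union G (T a) (s.biUnion T) ?_ ?_ ?_ ?_
    · rw [Finset.disjoint_biUnion_right]
      intro u hu
      exact hdisj a (by simp) u (by simp [hu]) (fun h => ha (h ▸ hu))
    · intro x hx y hy
      rw [Finset.mem_biUnion] at hy
      obtain ⟨u, hu, hyu⟩ := hy
      exact hanti a (by simp) u (by simp [hu]) (fun h => ha (h ▸ hu)) x hx y hyu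
    · exact hco a (by simp)
    · exact ih (fun u hu u' hu' h => hdisj u (by simp [hu]) u' (by simp [hu']) h)
        (fun u hu u' hu' h => hanti u (by simp [hu]) u' (by simp [hu']) h)
        (fun u hu => hco u (by simp [hu]))

/-- Let `0 < τ < 1` and let `G` be `τ`-critical. If `C 0, ..., C (m-1)` (with `m ≥ 1`)
are pairwise disjoint nonempty proper subsets of the vertex set, pairwise anticomplete
and each of cardinality at least `w ≥ 1`, then `G` contains an induced cograph of size
at least `m·w^τ`; consequently `m·w^τ < |G|^τ`. -/
theorem tauCritical_anticomplete_cograph {V : Type} [Fintype V] (G : SimpleGraph V)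
    (τ : ℝ) (hτ0 : 0 < τ) (hτ1 : τ < 1) (hcrit : TauCritical τ G)
    (m w : ℕ) (hm : 1 ≤ m) (hw : 1 ≤ w) (C : Fin m → Finset V)
    (hne : ∀ u, (C u).Nonempty) (hproper : ∀ u, C u ≠ Finset.univ)
    (hdisj : ∀ u u', u ≠ u' → Disjoint (C u) (C u'))
    (hanti : ∀ u u', u ≠ u' → ∀ x ∈ C u, ∀ y ∈ C u', ¬ G.Adj x y)
    (hcard : ∀ u, w ≤ (C u).card) :
    (∃ S : Finset V, IsCograph (G.induce (↑S : Set V)) ∧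
        (m : ℝ) * (w : ℝ) ^ τ ≤ (S.card : ℝ)) ∧
      (m : ℝ) * (w : ℝ) ^ τ < (Fintype.card V : ℝ) ^ τ := by
  classical
  choose T hTsub hTco hTcard using fun u => hcrit.2 (C u) (hne u) (hproper u)
  have : Nonempty (Fin m) := ⟨⟨0, hm⟩⟩
  set S : Finset V := Finset.univ.biUnion T with hS
  have hTdisj : ∀ u u', u ≠ u' → Disjoint (T u) (T u') := fun u u' h =>
    ((hdisj u u' h).mono (hTsub u) (hTsub u'))
  have hScog : IsCograph (G.induce (↑S : Set V)) := by
    refine cograph_biUnion G Finset.univ Finset.univ_nonempty T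
      (fun u _ u' _ h => hTdisj u u' h)
      (fun u _ u' _ h x hx y hy => hanti u u' h x (hTsub u hx) y (hTsub u' hy))
      (fun u _ => hTco u)
  have hwT : ∀ u, (w : ℝ) ^ τ ≤ ((T u).card : ℝ) := by
    intro u
    refine le_trans ?_ (hTcard u)
    exact Real.rpow_le_rpow (by positivity) (by exact_mod_cast hcard u) hτ0.le
  have hSc : ((m : ℝ)) * (w : ℝ) ^ τ ≤ (S.card : ℝ) := by
    have hcb : S.card = ∑ u, (T u).card :=
      Finset.card_biUnion (fun u _ u' _ h => hTdisj u u' h)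
    rw [hcb]
    push_cast
    calc (m : ℝ) * (w : ℝ) ^ τ = ∑ _u : Fin m, (w : ℝ) ^ τ := by
          rw [Finset.sum_const, Finset.card_univ, Fintype.card_fin, nsmul_eq_mul]
      _ ≤ ∑ u, ((T u).card : ℝ) := Finset.sum_le_sum (fun u _ => hwT u)
  exact ⟨⟨S, hScog, hSc⟩, lt_of_le_of_lt hSc (hcrit.1 S hScog)⟩
end
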